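/- If L is generic, then for every 1 ≤ m ≤ k the number of faces of Tonn^{n,k}(L) of cardinality m equals n·(m−1)!·S(k,m), where S(k,m) denotes the number of partitions of the set {1,…,k} into m nonempty blocks (the Stirling number of the second kind). -/

import Mathlib

/-- The maximal simplex `Δ(x;σ)` of the generalized Tonnetz `Tonn^{n,k}(L)`. -/
def tonnDelta (n k : ℕ) (L : Fin k → ℕ) (x : ZMod n) (σ : Equiv.Perm (Fin k)) :
    Finset (ZMod n) :=
  Finset.image
    (fun j : Fin k =>
      x + ((∑ i ∈ Finset.univ.filter (· < j), L (σ i) : ℕ) : ZMod n))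
    Finset.univ

/-- A nonempty subset `S ⊆ ℤ/nℤ` is a face of `Tonn^{n,k}(L)` if `S ⊆ Δ(x;σ)`
for some `x` and `σ`. -/
def IsTonnFace (n k : ℕ) (L : Fin k → ℕ) (S : Finset (ZMod n)) : Prop :=
  S.Nonempty ∧ ∃ (x : ZMod n) (σ : Equiv.Perm (Fin k)), S ⊆ tonnDelta n k L x σ

/-- `L` is generic: equal subset sums force equal subsets. -/
def TonnGeneric (k : ℕ) (L : Fin k → ℕ) : Prop :=
  ∀ I J : Finset (Fin k), (∑ i ∈ I, L i) = (∑ j ∈ J, L j) → I = J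

/-- The Stirling number of the second kind `S(k,m)`: the number of partitions
of `{1,…,k}` into `m` nonempty blocks. -/
noncomputable def stirlingSnd (k m : ℕ) : ℕ :=
  Set.ncard {P : Finpartition (Finset.univ : Finset (Fin k)) | P.parts.card = m}


open Finset
open Fin.NatCast

namespace TonnAux

/-- cast injectivity on `[0, n)` -/
lemma castInj {n a b : ℕ} (ha : a < n) (hb : b < n) (h : ((a : ℕ) : ZMod n) = b) : a = b := by
  haveI : NeZero n := ⟨by omega⟩
  have := congrArg ZMod.val h
  rwa [ZMod.val_cast_of_lt ha, ZMod.val_cast_of_lt hb] at this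

/-- generic sum-of-filter-on-val lemma -/
lemma sum_filter_val {N : ℕ} (r0 : Fin N) (p : ℕ → Prop) [DecidablePred p] (g : Fin N → ℕ) :
    ∑ r ∈ univ.filter (fun r : Fin N => p r.val), g r
      = ∑ i ∈ (range N).filter p, (if h : i < N then g ⟨i, h⟩ else 0) := by
  refine Finset.sum_nbij' (fun r => r.val) (fun i => if h : i < N then (⟨i, h⟩ : Fin N) else r0) ?_ ?_ ?_ ?_ ?_
  · intro a ha; simp only [mem_filter, mem_range] at *; exact ⟨a.isLt, ha.2⟩
  · intro i hi; simp only [mem_filter, mem_range] at hi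
    simp only [dif_pos hi.1, mem_filter, mem_univ, true_and]; exact hi.2
  · intro a _; simp [a.isLt]
  · intro i hi; simp only [mem_filter, mem_range] at hi; simp [dif_pos hi.1]
  · intro a ha; simp only [mem_filter, mem_range] at ha; simp [dif_pos ha.1]

section Defs

variable {k m : ℕ} [NeZero m]

def IsOP (k m : ℕ) (f : Fin m → Finset (Fin k)) : Prop :=
  (∀ i, (f i).Nonempty) ∧ (∀ i j : Fin m, i ≠ j → Disjoint (f i) (f j)) ∧
    Finset.univ.biUnion f = Finset.univ

def bS (L : Fin k → ℕ) (f : Fin m → Finset (Fin k)) (i : ℕ) : ℕ := ∑ a ∈ f (i : Fin m), L a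

def Cs (L : Fin k → ℕ) (f : Fin m → Finset (Fin k)) (t : ℕ) : ℕ := ∑ i ∈ range t, bS L f i

def phiF (n : ℕ) (L : Fin k → ℕ) (f : Fin m → Finset (Fin k)) (x : ZMod n) : Finset (ZMod n) :=
  Finset.image (fun t : Fin m => x + ((Cs L f t.val : ℕ) : ZMod n)) Finset.univ

end Defs

section CsLemmas

variable {n k m : ℕ} [NeZero m] {L : Fin k → ℕ} {f : Fin m → Finset (Fin k)}

lemma sumL_le (hsum : ∑ i, L i = n) (I : Finset (Fin k)) : ∑ a ∈ I, L a ≤ n := by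
  rw [← hsum]; exact Finset.sum_le_sum_of_subset (subset_univ I)

lemma sumL_lt (hL : ∀ i, 0 < L i) (hsum : ∑ i, L i = n) {I : Finset (Fin k)}
    (hI : I ≠ univ) : ∑ a ∈ I, L a < n := by
  obtain ⟨x, hx⟩ : ∃ x, x ∉ I := by
    by_contra h; push_neg at h; exact hI (eq_univ_iff_forall.2 h)
  rw [← hsum]
  exact Finset.sum_lt_sum_of_subset (subset_univ I) (mem_univ x) hx (hL x)
    (fun j _ _ => Nat.zero_le _)

lemma Cs_succ (t : ℕ) : Cs L f (t + 1) = Cs L f t + bS L f t := Finset.sum_range_succ _ _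

lemma bS_pos (hL : ∀ i, 0 < L i) (hf : ∀ i, (f i).Nonempty) (i : ℕ) : 0 < bS L f i := by
  obtain ⟨a, ha⟩ := hf ((i : Fin m))
  exact Finset.sum_pos' (fun _ _ => Nat.zero_le _) ⟨a, ha, hL a⟩

lemma Cs_strictMono (hL : ∀ i, 0 < L i) (hf : ∀ i, (f i).Nonempty) :
    StrictMono (Cs L f) := by
  apply strictMono_nat_of_lt_succ
  intro t; rw [Cs_succ]
  have := bS_pos (L := L) (f := f) hL hf t
  omega

def Ut (f : Fin m → Finset (Fin k)) (t : ℕ) : Finset (Fin k) :=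
  (range t).biUnion (fun i => f (i : Fin m))

lemma sum_Ut (hd : ∀ i j : Fin m, i ≠ j → Disjoint (f i) (f j)) {t : ℕ} (ht : t ≤ m) :
    ∑ a ∈ Ut f t, L a = Cs L f t := by
  rw [Ut, Finset.sum_biUnion]
  · rfl
  · intro i hi j hj hij
    simp only [coe_range, Set.mem_Iio] at hi hj
    apply hd
    intro h
    apply hij
    have : (i : Fin m).val = (j : Fin m).val := by rw [h]
    rwa [Fin.val_natCast, Fin.val_natCast, Nat.mod_eq_of_lt (by omega), Nat.mod_eq_of_lt (by omega)] at this

lemma Ut_univ (hc : Finset.univ.biUnion f = Finset.univ) : Ut f m = univ := by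
  apply eq_univ_iff_forall.2
  intro a
  have : a ∈ Finset.univ.biUnion f := by rw [hc]; exact mem_univ a
  obtain ⟨i, _, hi⟩ := Finset.mem_biUnion.1 this
  exact Finset.mem_biUnion.2 ⟨i.val, mem_range.2 i.isLt, by rwa [Fin.cast_val_eq_self]⟩

lemma Cs_m (hop : IsOP k m f) (hsum : ∑ i, L i = n) : Cs L f m = n := by
  rw [← sum_Ut hop.2.1 le_rfl, Ut_univ hop.2.2, ← hsum]

lemma Cs_lt_n (hL : ∀ i, 0 < L i) (hop : IsOP k m f) (hsum : ∑ i, L i = n) {t : ℕ}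
    (ht : t < m) : Cs L f t < n := by
  rw [← Cs_m (n := n) hop hsum]
  exact Cs_strictMono hL hop.1 ht

lemma Cs_add_m (hop : IsOP k m f) (hsum : ∑ i, L i = n) (t : ℕ) :
    Cs L f (t + m) = Cs L f t + n := by
  induction t with
  | zero => simpa [Cs] using Cs_m (n := n) hop hsum
  | succ t ih =>
    have hb : bS L f (t + m) = bS L f t := by
      unfold bS
      congr 2
      push_cast
      simp
    have h1 : t + 1 + m = (t + m) + 1 := by omega
    rw [h1, Cs_succ, ih, hb, Cs_succ]
    omega

lemma cast_Cs_mod (hop : IsOP k m f) (hsum : ∑ i, L i = n) (t : ℕ) :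
    ((Cs L f t : ℕ) : ZMod n) = ((Cs L f (t % m) : ℕ) : ZMod n) := by
  have key : ∀ q r : ℕ, Cs L f (q * m + r) = Cs L f r + q * n := by
    intro q
    induction q with
    | zero => simp
    | succ q ih =>
      intro r
      have : (q + 1) * m + r = (q * m + r) + m := by ring
      rw [this, Cs_add_m (n := n) hop hsum, ih]
      ring
  conv_lhs => rw [← Nat.div_add_mod t m, Nat.mul_comm, key]
  push_cast
  simp

end CsLemmas

section Phi

variable {n k m : ℕ} [NeZero m] {L : Fin k → ℕ} {f : Fin m → Finset (Fin k)}

lemma phiF_inj (hn : 0 < n) (hL : ∀ i, 0 < L i) (hop : IsOP k m f)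
    (hsum : ∑ i, L i = n) (x : ZMod n) :
    Function.Injective (fun t : Fin m => x + ((Cs L f t.val : ℕ) : ZMod n)) := by
  intro t s h
  simp only [add_right_inj] at h
  have ht := Cs_lt_n (n := n) hL hop hsum t.isLt
  have hs := Cs_lt_n (n := n) hL hop hsum s.isLt
  have := castInj ht hs h
  exact Fin.ext ((Cs_strictMono hL hop.1).injective this)

lemma phiF_card (hn : 0 < n) (hL : ∀ i, 0 < L i) (hop : IsOP k m f)
    (hsum : ∑ i, L i = n) (x : ZMod n) : (phiF n L f x).card = m := by
  rw [phiF, Finset.card_image_of_injective _ (phiF_inj hn hL hop hsum x)]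
  simp

lemma downset_eq {N : ℕ} (s : Finset (Fin N))
    (hs : ∀ r ∈ s, ∀ r', r' ≤ r → r' ∈ s) :
    s = univ.filter (fun r => r.val < s.card) := by
  ext r
  simp only [mem_filter, mem_univ, true_and]
  constructor
  · intro hr
    have h1 : Finset.Iic r ⊆ s := fun a ha => hs r hr a (mem_Iic.1 ha)
    have := Finset.card_le_card h1
    rw [Fin.card_Iic] at this
    omega
  · intro hr
    by_contra hrs
    have h1 : s ⊆ Finset.Iio r := by
      intro a ha
      rw [mem_Iio]
      rcases lt_or_ge a r with h | h
      · exact h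
      · exact absurd (hs a ha r h) hrs
    have := Finset.card_le_card h1
    rw [Fin.card_Iio] at this
    omega

lemma phiF_face (hn : 0 < n) (hL : ∀ i, 0 < L i) (hop : IsOP k m f)
    (hsum : ∑ i, L i = n) (x : ZMod n) : IsTonnFace n k L (phiF n L f x) := by
  classical
  obtain ⟨hne, hd, hc⟩ := hop
  -- block index function
  have hEU : ∀ a : Fin k, ∃! i : Fin m, a ∈ f i := by
    intro a
    have : a ∈ Finset.univ.biUnion f := by rw [hc]; exact mem_univ a
    obtain ⟨i, _, hi⟩ := Finset.mem_biUnion.1 this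
    refine ⟨i, hi, fun j hj => ?_⟩
    by_contra hij
    exact Finset.disjoint_left.1 (hd j i hij) hj hi
  set B : Fin k → Fin m := fun a => (hEU a).choose with hB
  have hBmem : ∀ a, a ∈ f (B a) := fun a => (hEU a).choose_spec.1
  have hBuniq : ∀ a i, a ∈ f i → i = B a := fun a i h => (hEU a).choose_spec.2 i h
  set σ : Equiv.Perm (Fin k) := Tuple.sort B with hσ
  have hmono : Monotone (B ∘ σ) := Tuple.monotone_sort B
  refine ⟨⟨x + ((Cs L f (0 : Fin m).val : ℕ) : ZMod n), Finset.mem_image_of_mem _ (mem_univ _)⟩,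
    x, σ, ?_⟩
  intro y hy
  obtain ⟨t, _, rfl⟩ := Finset.mem_image.1 hy
  -- the prefix set
  have claim1 : Ut f t.val = univ.filter (fun a => B a < t) := by
    ext a
    simp only [Ut, Finset.mem_biUnion, mem_range, mem_filter, mem_univ, true_and]
    constructor
    · rintro ⟨i, hi, ha⟩
      have hBa := hBuniq a _ ha
      rw [← hBa, Fin.lt_def, Fin.val_natCast, Nat.mod_eq_of_lt (by omega)]
      exact hi
    · intro h
      refine ⟨(B a).val, by omega, ?_⟩
      rw [Fin.cast_val_eq_self]
      exact hBmem a
  set ct := (Ut f t.val).card with hct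
  have claim2 : univ.filter (fun r : Fin k => B (σ r) < t) = univ.filter (fun r : Fin k => r.val < ct) := by
    have hcard : (univ.filter (fun r : Fin k => B (σ r) < t)).card = ct := by
      rw [hct, claim1]
      apply Finset.card_bij (fun r _ => σ r)
      · intro r hr; simp only [mem_filter, mem_univ, true_and] at *; exact hr
      · intro r _ r' _ h; exact σ.injective h
      · intro a ha
        refine ⟨σ.symm a, ?_, by simp⟩
        simp only [mem_filter, mem_univ, true_and, Equiv.apply_symm_apply] at *
        exact ha
    rw [← hcard]
    apply downset_eq
    intro r hr r' hr'
    simp only [mem_filter, mem_univ, true_and] at *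
    exact lt_of_le_of_lt (hmono hr') hr
  have hctk : ct < k := by
    have hUne : Ut f t.val ≠ univ := by
      intro hU
      obtain ⟨a, ha⟩ := hne t
      have : a ∈ Ut f t.val := hU ▸ mem_univ a
      rw [claim1, mem_filter] at this
      have := hBuniq a t ha
      omega
    have := Finset.card_lt_card (Finset.ssubset_univ_iff.2 hUne)
    simpa using this
  refine Finset.mem_image.2 ⟨⟨ct, hctk⟩, mem_univ _, ?_⟩
  have hsum2 : ∑ i ∈ univ.filter (· < (⟨ct, hctk⟩ : Fin k)), L (σ i) = Cs L f t.val := by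
    have : univ.filter (· < (⟨ct, hctk⟩ : Fin k)) = univ.filter (fun r : Fin k => r.val < ct) := by
      apply Finset.filter_congr
      intro r _
      simp [Fin.lt_def]
    rw [this, ← claim2]
    rw [← sum_Ut (L := L) hd (le_of_lt t.isLt)]
    apply Finset.sum_bij (fun r _ => σ r)
    · intro r hr
      simp only [mem_filter, mem_univ, true_and] at hr
      rw [claim1, mem_filter]
      exact ⟨mem_univ _, hr⟩
    · intro r _ r' _ h; exact σ.injective h
    · intro a ha
      rw [claim1, mem_filter] at ha
      exact ⟨σ.symm a, by simp [ha.2], by simp⟩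
    · intro r _; rfl
  rw [hsum2]

def rotF {k m : ℕ} [NeZero m] (d : ℕ) (f : Fin m → Finset (Fin k)) :
    Fin m → Finset (Fin k) := fun t => f (t + (d : Fin m))

lemma rotF_isOP (hop : IsOP k m f) (d : ℕ) : IsOP k m (rotF d f) := by
  obtain ⟨hne, hd, hc⟩ := hop
  refine ⟨fun i => hne _, fun i j hij => hd _ _ (fun h => hij (by
    have := congrArg (· - (d : Fin m)) h
    simpa using this)), ?_⟩
  apply eq_univ_iff_forall.2
  intro a
  have : a ∈ Finset.univ.biUnion f := by rw [hc]; exact mem_univ a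
  obtain ⟨i, _, hi⟩ := Finset.mem_biUnion.1 this
  exact Finset.mem_biUnion.2 ⟨i - (d : Fin m), mem_univ _, by simpa [rotF] using hi⟩

lemma bS_rot (d t : ℕ) : bS L (rotF d f) t = bS L f (t + d) := by
  unfold bS rotF
  congr 2
  push_cast
  rfl

lemma Cs_rot (d : ℕ) : ∀ t : ℕ, Cs L (rotF d f) t + Cs L f d = Cs L f (t + d) := by
  intro t
  induction t with
  | zero => simp [Cs]
  | succ t ih =>
    rw [Cs_succ, bS_rot]
    have : t + 1 + d = (t + d) + 1 := by omega
    rw [this, Cs_succ, ← ih]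
    ring

lemma phiF_rot (hop : IsOP k m f) (hsum : ∑ i, L i = n) (d : ℕ) (x : ZMod n) :
    phiF n L f x = phiF n L (rotF d f) (x + ((Cs L f d : ℕ) : ZMod n)) := by
  unfold phiF
  have key : ∀ t : Fin m,
      x + ((Cs L f d : ℕ) : ZMod n) + ((Cs L (rotF d f) t.val : ℕ) : ZMod n)
        = x + ((Cs L f ((t + (d : Fin m)) : Fin m).val : ℕ) : ZMod n) := by
    intro t
    have h1 : ((Cs L (rotF d f) t.val + Cs L f d : ℕ) : ZMod n)
        = ((Cs L f (t.val + d) : ℕ) : ZMod n) := by rw [Cs_rot]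
    have h2 : ((Cs L f (t.val + d) : ℕ) : ZMod n)
        = ((Cs L f ((t.val + d) % m) : ℕ) : ZMod n) := cast_Cs_mod (n := n) hop hsum _
    have h3 : ((t + (d : Fin m)) : Fin m).val = (t.val + d) % m := by
      rw [Fin.add_def, Fin.val_natCast]
      exact Nat.add_mod_mod t.val d m
    push_cast at h1
    rw [h3, ← h2, ← h1]
    ring
  apply Finset.ext
  intro y
  simp only [Finset.mem_image, mem_univ, true_and]
  constructor
  · rintro ⟨t, rfl⟩
    refine ⟨t - (d : Fin m), ?_⟩
    rw [key (t - (d : Fin m)), sub_add_cancel]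
  · rintro ⟨t, rfl⟩
    exact ⟨t + (d : Fin m), (key t).symm⟩

end Phi

section Construct

variable {n k m : ℕ} [NeZero m] {L : Fin k → ℕ}

lemma face_eq_phiF (hn : 0 < n) (hL : ∀ i, 0 < L i) (hsum : ∑ i, L i = n)
    {S : Finset (ZMod n)} (hface : IsTonnFace n k L S) (hcard : S.card = m) :
    ∃ (x' : ZMod n) (f : Fin m → Finset (Fin k)), IsOP k m f ∧ phiF n L f x' = S := by
  classical
  obtain ⟨hSne, x, σ, hsub⟩ := hface
  have hm0 : 0 < m := Nat.pos_of_ne_zero (NeZero.ne m)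
  have hk0 : 0 < k := by
    rcases Nat.eq_zero_or_pos k with h | h
    · subst h; simp at hsum; omega
    · exact h
  -- prefix sums along σ
  set G : ℕ → ℕ := fun i => if h : i < k then L (σ ⟨i, h⟩) else 0 with hG
  set PS : ℕ → ℕ := fun t => ∑ i ∈ range t, G i with hPS
  have psum_eq : ∀ j : Fin k, ∑ i ∈ univ.filter (· < j), L (σ i) = PS j.val := by
    intro j
    have h1 : (univ.filter (· < j)) = univ.filter (fun r : Fin k => r.val < j.val) := by
      apply Finset.filter_congr; intro r _; exact Fin.lt_def
    rw [h1, sum_filter_val j (fun i => i < j.val) (fun r => L (σ r))]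
    have h2 : (range k).filter (· < j.val) = range j.val := by
      ext i; simp only [mem_filter, mem_range]; constructor
      · rintro ⟨_, h⟩; exact h
      · intro h; exact ⟨lt_trans h j.isLt, h⟩
    rw [h2]
  have arc_eq : ∀ a b : Fin k, a ≤ b →
      (∑ r ∈ univ.filter (fun r => a ≤ r ∧ r < b), L (σ r)) + PS a.val = PS b.val := by
    intro a b hab
    have h1 : (univ.filter (fun r : Fin k => a ≤ r ∧ r < b))
        = univ.filter (fun r : Fin k => a.val ≤ r.val ∧ r.val < b.val) := by
      apply Finset.filter_congr; intro r _
      exact and_congr Fin.le_def Fin.lt_def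
    rw [h1, sum_filter_val a (fun i => a.val ≤ i ∧ i < b.val) (fun r => L (σ r))]
    have h2 : (range k).filter (fun i => a.val ≤ i ∧ i < b.val) = Finset.Ico a.val b.val := by
      ext i; simp only [mem_filter, mem_range, Finset.mem_Ico]; constructor
      · rintro ⟨_, h⟩; exact h
      · intro h; exact ⟨lt_trans h.2 b.isLt, h⟩
    rw [h2]
    have h3 : ∑ i ∈ Finset.Ico a.val b.val, G i = ∑ i ∈ Finset.Ico a.val b.val,
        (fun i => if h : i < k then L (σ ⟨i, h⟩) else 0) i := rfl
    rw [h3, add_comm]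
    have := Finset.sum_range_add_sum_Ico
      (fun i => if h : i < k then L (σ ⟨i, h⟩) else 0) (Fin.le_def.1 hab)
    exact this
  -- PS values via sets
  set V : ℕ → Finset (Fin k) := fun t => Finset.image σ (univ.filter (fun r : Fin k => r.val < t))
    with hV
  have sumV : ∀ t, ∑ a ∈ V t, L a = PS t := by
    intro t
    rw [hV]
    rw [Finset.sum_image (fun r _ r' _ h => σ.injective h)]
    rw [sum_filter_val ⟨0, hk0⟩ (fun i => i < t) (fun r => L (σ r))]
    have hcon : ∀ i ∈ (range k).filter (fun i => i < t),
        (if h : i < k then L (σ ⟨i, h⟩) else 0) = G i := by intro i _; rfl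
    rw [Finset.sum_congr rfl hcon]
    by_cases hkt : t ≤ k
    · have h2 : (range k).filter (fun i => i < t) = range t := by
        ext i; simp only [mem_filter, mem_range]; omega
      rw [h2]
    · have h2 : (range k).filter (fun i => i < t) = range k := by
        ext i; simp only [mem_filter, mem_range]; omega
      rw [h2]
      have hz : ∑ i ∈ Finset.Ico k t, G i = 0 := by
        apply Finset.sum_eq_zero
        intro i hi
        rw [Finset.mem_Ico] at hi
        rw [hG]; simp only [dif_neg (by omega : ¬ i < k)]
      show ∑ i ∈ range k, G i = ∑ i ∈ range t, G i
      rw [← Finset.sum_range_add_sum_Ico G (by omega : k ≤ t), hz, Nat.add_zero]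
  have PS_lt : ∀ t, t < k → PS t < n := by
    intro t ht
    rw [← sumV t]
    apply sumL_lt hL hsum
    intro hVu
    have : σ ⟨t, ht⟩ ∈ V t := hVu ▸ mem_univ _
    rw [hV] at this
    obtain ⟨r, hr, hre⟩ := Finset.mem_image.1 this
    rw [mem_filter] at hr
    have := σ.injective hre
    rw [this] at hr
    simp at hr
  have PS_mono : ∀ s t, s < t → t ≤ k → PS s < PS t := by
    intro s t hst htk
    have : PS s < PS (s + 1) := by
      rw [hPS]
      simp only [Finset.sum_range_succ]
      have : G s = L (σ ⟨s, by omega⟩) := by rw [hG]; simp [dif_pos (by omega : s < k)]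
      rw [this]
      have := hL (σ ⟨s, by omega⟩)
      omega
    calc PS s < PS (s+1) := this
      _ ≤ PS t := Finset.sum_le_sum_of_subset (Finset.range_subset_range.2 (by omega))
  -- the points of the Delta
  set p : Fin k → ZMod n := fun j => x + ((PS j.val : ℕ) : ZMod n) with hp
  have hdel : tonnDelta n k L x σ = Finset.image p univ := by
    unfold tonnDelta
    apply Finset.image_congr
    intro j _
    show x + ((∑ i ∈ univ.filter (· < j), L (σ i) : ℕ) : ZMod n) = p j
    rw [psum_eq j]
  have pinj : Function.Injective p := by
    intro a b h
    rw [hp] at h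
    simp only [add_right_inj] at h
    have := castInj (PS_lt a.val a.isLt) (PS_lt b.val b.isLt) h
    apply Fin.ext
    by_contra hne
    rcases Nat.lt_or_ge a.val b.val with hlt | hge
    · have := PS_mono a.val b.val hlt (le_of_lt b.isLt); omega
    · have hlt : b.val < a.val := by omega
      have := PS_mono b.val a.val hlt (le_of_lt a.isLt); omega
  set J : Finset (Fin k) := univ.filter (fun j => p j ∈ S) with hJdef
  have hSJ : Finset.image p J = S := by
    ext y
    constructor
    · intro hy
      obtain ⟨j, hj, rfl⟩ := Finset.mem_image.1 hy
      rw [hJdef, mem_filter] at hj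
      exact hj.2
    · intro hy
      have := hsub hy
      rw [hdel] at this
      obtain ⟨j, _, rfl⟩ := Finset.mem_image.1 this
      exact Finset.mem_image.2 ⟨j, by rw [hJdef, mem_filter]; exact ⟨mem_univ _, hy⟩, rfl⟩
  have hJ : J.card = m := by
    rw [← hcard, ← hSJ, Finset.card_image_of_injective _ pinj]
  set e := J.orderEmbOfFin hJ with he
  have hemem : ∀ t, e t ∈ J := fun t => J.orderEmbOfFin_mem hJ t
  have himage : Finset.image (fun t => e t) univ = J := by
    apply Finset.eq_of_subset_of_card_le
    · intro a ha
      obtain ⟨t, _, rfl⟩ := Finset.mem_image.1 ha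
      exact hemem t
    · rw [hJ, Finset.card_image_of_injective _ e.injective]
      simp
  set e0 : Fin k := e ⟨0, hm0⟩ with he0
  set g : ℕ → Finset (Fin k) := fun t =>
    if h : t < m then Finset.image σ (univ.filter (fun r => e0 ≤ r ∧ r < e ⟨t, h⟩)) else univ
    with hg
  set f : Fin m → Finset (Fin k) := fun t => g (t.val + 1) \ g t.val with hf
  have g0 : g 0 = (∅ : Finset (Fin k)) := by
    rw [hg]
    simp only [dif_pos hm0]
    have : (univ.filter (fun r : Fin k => e0 ≤ r ∧ r < e ⟨0, hm0⟩)) = ∅ := by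
      apply Finset.filter_false_of_mem
      intro r _
      rw [← he0]
      rintro ⟨h1, h2⟩
      exact absurd (lt_of_le_of_lt h1 h2) (lt_irrefl _)
    rw [this, Finset.image_empty]
  have gm : ∀ t, m ≤ t → g t = univ := by
    intro t ht
    rw [hg]
    exact dif_neg (by omega)
  have gstep : ∀ u, g u ⊆ g (u + 1) := by
    intro u
    by_cases h1 : u + 1 < m
    · have h0 : u < m := by omega
      rw [hg]
      simp only [dif_pos h1, dif_pos h0]
      apply Finset.image_subset_image
      intro r hr
      rw [mem_filter] at hr ⊢
      exact ⟨hr.1, hr.2.1, lt_of_lt_of_le hr.2.2 (e.monotone (by simp [Fin.le_def]))⟩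
    · rw [gm (u + 1) (by omega)]
      exact Finset.subset_univ _
  have gmono : Monotone g := monotone_nat_of_le_succ gstep
  have gsum : ∀ t (h : t < m), (∑ a ∈ g t, L a) + PS e0.val = PS (e ⟨t, h⟩).val := by
    intro t h
    rw [hg]
    simp only [dif_pos h]
    rw [Finset.sum_image (fun r _ r' _ hr => σ.injective hr)]
    exact arc_eq e0 (e ⟨t, h⟩) (e.monotone (by simp [Fin.le_def]))
  have fne : ∀ t : Fin m, (f t).Nonempty := by
    intro t
    refine ⟨σ (e t), ?_⟩
    rw [hf]
    simp only [Finset.mem_sdiff]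
    constructor
    · by_cases h1 : t.val + 1 < m
      · rw [hg]
        simp only [dif_pos h1]
        apply Finset.mem_image_of_mem
        rw [mem_filter]
        refine ⟨mem_univ _, e.monotone (by simp [Fin.le_def]), ?_⟩
        have : t < (⟨t.val + 1, h1⟩ : Fin m) := by simp [Fin.lt_def]
        exact e.strictMono this
      · rw [gm _ (by omega)]; exact mem_univ _
    · rw [hg]
      simp only [dif_pos t.isLt]
      intro hmem
      obtain ⟨r, hr, hre⟩ := Finset.mem_image.1 hmem
      have := σ.injective hre
      subst this
      rw [mem_filter] at hr
      have h2 := hr.2.2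
      have : (⟨t.val, t.isLt⟩ : Fin m) = t := rfl
      rw [this] at h2
      exact absurd h2 (lt_irrefl _)
  have fdisj : ∀ i j : Fin m, i ≠ j → Disjoint (f i) (f j) := by
    have key : ∀ i j : Fin m, i < j → Disjoint (f i) (f j) := by
      intro i j hij
      rw [Finset.disjoint_left]
      intro a hai haj
      rw [hf, Finset.mem_sdiff] at hai haj
      exact haj.2 (gmono (by have := Fin.lt_def.1 hij; omega : i.val + 1 ≤ j.val) hai.1)
    intro i j hij
    rcases lt_or_gt_of_ne hij with h | h
    · exact key i j h
    · exact (key j i h).symm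
  have fcover : Finset.univ.biUnion f = univ := by
    apply eq_univ_iff_forall.2
    intro a
    have hex : ∃ t, a ∈ g (t + 1) := ⟨m, by rw [gm _ (by omega)]; exact mem_univ a⟩
    have ht0 : a ∈ g (Nat.find hex + 1) := Nat.find_spec hex
    have ht0m : Nat.find hex < m := by
      have : Nat.find hex ≤ m - 1 :=
        Nat.find_le (by rw [show m - 1 + 1 = m by omega, gm m le_rfl]; exact mem_univ a)
      omega
    refine Finset.mem_biUnion.2 ⟨⟨Nat.find hex, ht0m⟩, mem_univ _, ?_⟩
    rw [hf, Finset.mem_sdiff]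
    refine ⟨ht0, ?_⟩
    show a ∉ g (Nat.find hex)
    rcases Nat.eq_zero_or_pos (Nat.find hex) with h0 | h0
    · rw [h0, g0]; exact notMem_empty a
    · have := Nat.find_min hex (show Nat.find hex - 1 < Nat.find hex by omega)
      rwa [show Nat.find hex - 1 + 1 = Nat.find hex by omega] at this
  have hop : IsOP k m f := ⟨fne, fdisj, fcover⟩
  have bSf : ∀ c, c < m → bS L f c + ∑ a ∈ g c, L a = ∑ a ∈ g (c + 1), L a := by
    intro c hc
    have hcast : ((c : ℕ) : Fin m) = ⟨c, hc⟩ :=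
      Fin.ext (by rw [Fin.val_natCast]; exact Nat.mod_eq_of_lt hc)
    unfold bS
    rw [hcast]
    have hfc : f ⟨c, hc⟩ = g (c + 1) \ g c := rfl
    rw [hfc, Finset.sum_sdiff (gstep c)]
  have CsG : ∀ t, t ≤ m → Cs L f t = ∑ a ∈ g t, L a := by
    intro t
    induction t with
    | zero => intro _; rw [g0]; simp [Cs]
    | succ t ih =>
      intro h
      rw [Cs_succ, ih (by omega), ← bSf t (by omega)]
      ring
  refine ⟨p e0, f, hop, ?_⟩
  have hpoint : ∀ t : Fin m, p e0 + ((Cs L f t.val : ℕ) : ZMod n) = p (e t) := by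
    intro t
    have h1 : Cs L f t.val + PS e0.val = PS (e t).val := by
      rw [CsG t.val (le_of_lt t.isLt)]
      have := gsum t.val t.isLt
      have het : e ⟨t.val, t.isLt⟩ = e t := rfl
      rw [het] at this
      exact this
    rw [hp]
    show x + ((PS e0.val : ℕ) : ZMod n) + ((Cs L f t.val : ℕ) : ZMod n)
      = x + ((PS (e t).val : ℕ) : ZMod n)
    rw [← h1]
    push_cast
    ring
  show Finset.image (fun t : Fin m => p e0 + ((Cs L f t.val : ℕ) : ZMod n)) univ = S
  rw [Finset.image_congr (fun t _ => hpoint t)]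
  rw [show (fun t : Fin m => p (e t)) = p ∘ (fun t => e t) from rfl]
  rw [← Finset.image_image, himage, hSJ]

end Construct

section Inject

variable {n k m : ℕ} [NeZero m] {L : Fin k → ℕ} {f f' : Fin m → Finset (Fin k)}

def finLast (m : ℕ) [NeZero m] : Fin m :=
  ⟨m - 1, Nat.sub_lt (Nat.pos_of_ne_zero (NeZero.ne m)) Nat.one_pos⟩

lemma Cs_zero : Cs L f 0 = 0 := by simp [Cs]

lemma baseP (hn : 0 < n) (hL : ∀ i, 0 < L i) (hop : IsOP k m f)
    (hsum : ∑ i, L i = n) (hgen : TonnGeneric k L) {κ : Fin k}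
    (hN : κ ∈ f (finLast m)) (x : ZMod n) :
    ∀ z ∈ phiF n L f x, z ≠ x → ∀ I : Finset (Fin k), I.Nonempty → I ≠ univ →
      ((∑ a ∈ I, L a : ℕ) : ZMod n) = x - z → κ ∈ I := by
  intro z hz hzx I hIne hIu hcast
  obtain ⟨s, _, rfl⟩ := Finset.mem_image.1 hz
  have hs0 : s.val ≠ 0 := by
    intro h
    apply hzx
    rw [h, Cs_zero]
    simp
  have hCs_pos : 0 < Cs L f s.val := by
    have := Cs_strictMono hL hop.1 (show 0 < s.val by omega)
    rw [Cs_zero] at this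
    exact this
  have hCs_lt : Cs L f s.val < n := Cs_lt_n (n := n) hL hop hsum s.isLt
  have hx_z : x - (x + ((Cs L f s.val : ℕ) : ZMod n)) = ((n - Cs L f s.val : ℕ) : ZMod n) := by
    have h1 : ((n - Cs L f s.val : ℕ) : ZMod n) + ((Cs L f s.val : ℕ) : ZMod n) = 0 := by
      rw [← Nat.cast_add, show n - Cs L f s.val + Cs L f s.val = n by omega, ZMod.natCast_self]
    linear_combination -h1
  have hIsum : ∑ a ∈ I, L a = n - Cs L f s.val := by
    apply castInj (sumL_lt hL hsum hIu) (by omega)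
    rw [hcast, hx_z]
  have hJ : ∑ a ∈ univ \ Ut f s.val, L a = n - Cs L f s.val := by
    have h1 := sum_Ut (L := L) hop.2.1 (le_of_lt s.isLt)
    have h2 : ∑ a ∈ univ \ Ut f s.val, L a + ∑ a ∈ Ut f s.val, L a = n := by
      rw [Finset.sum_sdiff (Finset.subset_univ _)]
      exact hsum
    omega
  have hIJ : I = univ \ Ut f s.val := hgen _ _ (hIsum.trans hJ.symm)
  rw [hIJ, Finset.mem_sdiff]
  refine ⟨mem_univ _, ?_⟩
  intro hmem
  obtain ⟨i, hi, hfi⟩ := Finset.mem_biUnion.1 hmem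
  rw [mem_range] at hi
  have hne : ((i : ℕ) : Fin m) ≠ finLast m := by
    intro h
    have := congrArg Fin.val h
    rw [Fin.val_natCast, Nat.mod_eq_of_lt (by omega)] at this
    have hsm : s.val ≤ m - 1 := by have := s.isLt; omega
    simp only [finLast] at this
    omega
  exact Finset.disjoint_left.1 (hop.2.1 _ _ hne) hfi hN

lemma phiF_inj_full (hn : 0 < n) (hL : ∀ i, 0 < L i) (hsum : ∑ i, L i = n)
    (hgen : TonnGeneric k L) {x x' : ZMod n}
    (hop : IsOP k m f) (hop' : IsOP k m f') {κ : Fin k}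
    (hN : κ ∈ f (finLast m)) (hN' : κ ∈ f' (finLast m))
    (heq : phiF n L f x = phiF n L f' x') : x = x' ∧ f = f' := by
  have hm0 : 0 < m := Nat.pos_of_ne_zero (NeZero.ne m)
  have hx'S : x' ∈ phiF n L f x := by
    rw [heq]
    have h0 : (fun u : Fin m => x' + ((Cs L f' u.val : ℕ) : ZMod n)) ⟨0, hm0⟩
        ∈ phiF n L f' x' :=
      Finset.mem_image_of_mem _ (mem_univ _)
    have h1 : x' + ((Cs L f' 0 : ℕ) : ZMod n) ∈ phiF n L f' x' := h0
    rw [Cs_zero] at h1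
    simpa using h1
  obtain ⟨t, _, hqt⟩ := Finset.mem_image.1 hx'S
  have ht0 : t.val = 0 := by
    by_contra ht
    have hm2 : 2 ≤ m := by have := t.isLt; omega
    set t1 : Fin m := ⟨t.val - 1, by omega⟩ with ht1
    have ht1lt : t1.val < m - 1 := by
      simp only [ht1]
      have := t.isLt
      omega
    have hz : x + ((Cs L f t1.val : ℕ) : ZMod n) ∈ phiF n L f' x' := by
      rw [← heq]
      exact Finset.mem_image_of_mem (fun u : Fin m => x + ((Cs L f u.val : ℕ) : ZMod n))
        (mem_univ t1)
    have ht1ne : t1 ≠ finLast m := by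
      intro h
      have := congrArg Fin.val h
      simp only [finLast] at this
      omega
    have hbSt1 : ∑ a ∈ f t1, L a = bS L f t1.val := by
      unfold bS
      rw [Fin.cast_val_eq_self]
    have hdisj := hop.2.1 t1 (finLast m) ht1ne
    have hIu : f t1 ≠ univ := by
      intro h
      exact Finset.disjoint_left.1 hdisj (h ▸ mem_univ κ) hN
    have hcast : ((∑ a ∈ f t1, L a : ℕ) : ZMod n)
        = x' - (x + ((Cs L f t1.val : ℕ) : ZMod n)) := by
      rw [← hqt, hbSt1]
      have hc := Cs_succ (L := L) (f := f) t1.val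
      rw [show t1.val + 1 = t.val by simp only [ht1]; omega] at hc
      rw [hc]
      push_cast
      ring
    have := baseP hn hL hop' hsum hgen hN' x' _ hz
      (by
        rw [← hqt]
        intro h
        have h2 := add_left_cancel h
        have hlt1 := Cs_lt_n (n := n) hL hop hsum t1.isLt
        have hlt2 := Cs_lt_n (n := n) hL hop hsum t.isLt
        have := castInj hlt1 hlt2 h2
        have := (Cs_strictMono hL hop.1).injective this
        simp only [ht1] at this
        omega)
      (f t1) (hop.1 t1) hIu hcast
    exact Finset.disjoint_left.1 hdisj this hN
  have hxx' : x = x' := by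
    rw [← hqt, ht0, Cs_zero]
    simp
  subst hxx'
  refine ⟨rfl, ?_⟩
  -- equal partial sums
  set F : Fin m → ℕ := fun t => Cs L f t.val with hF
  set F' : Fin m → ℕ := fun t => Cs L f' t.val with hF'
  have hFmono : StrictMono F := fun a b h => Cs_strictMono hL hop.1 (Fin.lt_def.1 h)
  have hF'mono : StrictMono F' := fun a b h => Cs_strictMono hL hop'.1 (Fin.lt_def.1 h)
  have himg : Finset.image F univ = Finset.image F' univ := by
    ext c
    simp only [Finset.mem_image, mem_univ, true_and]
    constructor
    · rintro ⟨u, rfl⟩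
      have hmem : x + ((F u : ℕ) : ZMod n) ∈ phiF n L f' x := by
        rw [← heq]
        exact Finset.mem_image_of_mem (fun w : Fin m => x + ((F w : ℕ) : ZMod n)) (mem_univ u)
      obtain ⟨v, _, hv⟩ := Finset.mem_image.1 hmem
      refine ⟨v, ?_⟩
      have h2 := add_left_cancel hv
      exact castInj (Cs_lt_n (n := n) hL hop' hsum v.isLt)
        (Cs_lt_n (n := n) hL hop hsum u.isLt) h2
    · rintro ⟨u, rfl⟩
      have hmem : x + ((F' u : ℕ) : ZMod n) ∈ phiF n L f x := by
        rw [heq]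
        exact Finset.mem_image_of_mem (fun w : Fin m => x + ((F' w : ℕ) : ZMod n)) (mem_univ u)
      obtain ⟨v, _, hv⟩ := Finset.mem_image.1 hmem
      refine ⟨v, ?_⟩
      have h2 := add_left_cancel hv
      exact castInj (Cs_lt_n (n := n) hL hop hsum v.isLt)
        (Cs_lt_n (n := n) hL hop' hsum u.isLt) h2
  have hcardim : (Finset.image F univ).card = m := by
    rw [Finset.card_image_of_injective _ hFmono.injective]
    simp
  have hFeq : F = F' := by
    have h1 := Finset.orderEmbOfFin_unique hcardim
      (fun u => Finset.mem_image_of_mem _ (mem_univ u)) hFmono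
    have h2 := Finset.orderEmbOfFin_unique hcardim
      (f := F') (fun u => by rw [himg]; exact Finset.mem_image_of_mem _ (mem_univ u)) hF'mono
    exact h1.trans h2.symm
  funext t
  apply hgen
  have h0 : Cs L f t.val = Cs L f' t.val := congrFun hFeq t
  have h1 : Cs L f (t.val + 1) = Cs L f' (t.val + 1) := by
    rcases Nat.lt_or_ge (t.val + 1) m with h | h
    · exact congrFun hFeq ⟨t.val + 1, h⟩
    · have hm : t.val + 1 = m := by have := t.isLt; omega
      rw [hm, Cs_m (n := n) hop hsum, Cs_m (n := n) hop' hsum]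
  have hc1 := Cs_succ (L := L) (f := f) t.val
  have hc2 := Cs_succ (L := L) (f := f') t.val
  have hb : bS L f t.val = bS L f' t.val := by omega
  have e1 : ∑ a ∈ f t, L a = bS L f t.val := by unfold bS; rw [Fin.cast_val_eq_self]
  have e2 : ∑ a ∈ f' t, L a = bS L f' t.val := by unfold bS; rw [Fin.cast_val_eq_self]
  rw [e1, e2, hb]

end Inject

section Count

variable {k m' : ℕ}

lemma isOP_injective {f : Fin m → Finset (Fin k)} [NeZero m] (hop : IsOP k m f) :
    Function.Injective f := by
  intro i j hij
  by_contra hne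
  obtain ⟨a, ha⟩ := hop.1 i
  exact Finset.disjoint_left.1 (hop.2.1 i j hne) ha (hij ▸ ha)

def mkPart (f : Fin (m' + 1) → Finset (Fin k)) (hop : IsOP k (m' + 1) f) :
    Finpartition (Finset.univ : Finset (Fin k)) where
  parts := Finset.image f univ
  supIndep := by
    rw [Finset.supIndep_iff_pairwiseDisjoint]
    rintro s hs t ht hst
    simp only [Finset.coe_image, Set.mem_image] at hs ht
    obtain ⟨i, _, rfl⟩ := hs
    obtain ⟨j, _, rfl⟩ := ht
    exact hop.2.1 i j (fun h => hst (by rw [h]))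
  sup_parts := by
    rw [Finset.sup_image]
    have : ((id : Finset (Fin k) → Finset (Fin k)) ∘ f) = f := rfl
    rw [this, Finset.sup_eq_biUnion]
    exact hop.2.2
  bot_notMem := by
    intro h
    obtain ⟨i, _, hi⟩ := Finset.mem_image.1 h
    obtain ⟨a, ha⟩ := hop.1 i
    rw [hi] at ha
    exact absurd ha (Finset.notMem_empty a)

lemma mkPart_card {f : Fin (m' + 1) → Finset (Fin k)} (hop : IsOP k (m' + 1) f) :
    (mkPart f hop).parts.card = m' + 1 := by
  show (Finset.image f univ).card = m' + 1
  rw [Finset.card_image_of_injective _ (isOP_injective hop)]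
  simp

lemma finLast_succ : finLast (m' + 1) = Fin.last m' := rfl

lemma card_NOP (κ : Fin k) :
    Nat.card {f : Fin (m' + 1) → Finset (Fin k) //
        IsOP k (m' + 1) f ∧ κ ∈ f (finLast (m' + 1))}
      = stirlingSnd k (m' + 1) * m'.factorial := by
  classical
  set NOPt := {f : Fin (m' + 1) → Finset (Fin k) //
      IsOP k (m' + 1) f ∧ κ ∈ f (finLast (m' + 1))} with hNOPt
  set PartM := {P : Finpartition (Finset.univ : Finset (Fin k)) // P.parts.card = m' + 1}
    with hPartM
  set π : NOPt → PartM := fun g => ⟨mkPart g.1 g.2.1, mkPart_card g.2.1⟩ with hπ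
  rw [Nat.card_eq_fintype_card, ← Finset.card_univ]
  have hfib := Finset.card_eq_sum_card_fiberwise
    (f := π) (s := (Finset.univ : Finset NOPt)) (t := (Finset.univ : Finset PartM))
    (fun x _ => mem_univ _)
  rw [hfib]
  have hstir : stirlingSnd k (m' + 1) = (Finset.univ : Finset PartM).card := by
    rw [stirlingSnd, ← Nat.card_coe_set_eq, Nat.card_eq_fintype_card, Finset.card_univ]
    exact Fintype.card_congr (Equiv.subtypeEquivRight fun _ => Iff.rfl)
  have hfiber : ∀ P : PartM,
      (Finset.univ.filter (fun g : NOPt => π g = P)).card = m'.factorial := by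
    intro P
    set p0 := P.1.part κ with hp0
    have hp0mem : p0 ∈ P.1.parts := P.1.part_mem.2 (mem_univ κ)
    have hκp0 : κ ∈ p0 := P.1.mem_part_self.2 (mem_univ κ)
    have hcerase : (P.1.parts.erase p0).card = m' := by
      rw [Finset.card_erase_of_mem hp0mem, P.2]
      omega
    have hparts : ∀ g : NOPt, π g = P → P.1.parts = Finset.image g.1 univ := by
      intro g hg
      rw [← hg]
      rfl
    have hglast : ∀ g : NOPt, π g = P → g.1 (Fin.last m') = p0 := by
      intro g hg
      have h1 : g.1 (Fin.last m') ∈ P.1.parts := by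
        rw [hparts g hg]
        exact Finset.mem_image_of_mem _ (mem_univ _)
      exact P.1.eq_of_mem_parts h1 hp0mem (finLast_succ ▸ g.2.2) hκp0
    set X := {a // a ∈ P.1.parts.erase p0} with hX
    -- forward data
    have hfwd_mem : ∀ (g : NOPt), π g = P → ∀ i : Fin m',
        g.1 i.castSucc ∈ P.1.parts.erase p0 := by
      intro g hg i
      rw [Finset.mem_erase]
      constructor
      · rw [← hglast g hg]
        intro h
        have := isOP_injective g.2.1 h
        have h2 := congrArg Fin.val this
        simp only [Fin.coe_castSucc, Fin.val_last] at h2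
        exact Nat.ne_of_lt i.isLt h2
      · rw [hparts g hg]
        exact Finset.mem_image_of_mem _ (mem_univ _)
    have key : ∀ (E : Fin m' ↪ X),
        Finset.image (fun i : Fin m' => (E i).1) univ = P.1.parts.erase p0 := by
      intro E
      apply Finset.eq_of_subset_of_card_le
      · intro a ha
        obtain ⟨i, _, rfl⟩ := Finset.mem_image.1 ha
        exact (E i).2
      · rw [hcerase, Finset.card_image_of_injective _
          (fun i j hij => E.injective (Subtype.ext hij))]
        simp
    -- inverse data
    have hinv : ∀ E : Fin m' ↪ X,
        ∃ hgE : IsOP k (m' + 1) (Fin.lastCases p0 (fun i => (E i).1)) ∧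
          κ ∈ (Fin.lastCases p0 (fun i => (E i).1) : Fin (m' + 1) → Finset (Fin k))
            (finLast (m' + 1)),
        π ⟨Fin.lastCases p0 (fun i => (E i).1), hgE⟩ = P := by
      intro E
      set g : Fin (m' + 1) → Finset (Fin k) := Fin.lastCases p0 (fun i => (E i).1) with hgdef
      have hgl : g (Fin.last m') = p0 := by simp [hgdef]
      have hgc : ∀ i : Fin m', g i.castSucc = (E i).1 := by intro i; simp [hgdef]
      have himg : Finset.image g univ = P.1.parts := by
        apply Finset.Subset.antisymm
        · intro a ha
          obtain ⟨t, _, rfl⟩ := Finset.mem_image.1 ha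
          rcases Fin.eq_castSucc_or_eq_last t with ⟨t', rfl⟩ | rfl
          · rw [hgc]
            exact Finset.mem_of_mem_erase (E t').2
          · rw [hgl]; exact hp0mem
        · intro a hap
          by_cases hap0 : a = p0
          · exact Finset.mem_image.2 ⟨Fin.last m', mem_univ _, by rw [hgl, hap0]⟩
          · have : a ∈ P.1.parts.erase p0 := Finset.mem_erase.2 ⟨hap0, hap⟩
            rw [← key E] at this
            obtain ⟨i, _, rfl⟩ := Finset.mem_image.1 this
            exact Finset.mem_image.2 ⟨i.castSucc, mem_univ _, hgc i⟩
      have hmem : ∀ t, g t ∈ P.1.parts := by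
        intro t
        rw [← himg]
        exact Finset.mem_image_of_mem _ (mem_univ _)
      have ginj : Function.Injective g := by
        intro i j h
        rcases Fin.eq_castSucc_or_eq_last i with ⟨i', rfl⟩ | rfl <;>
          rcases Fin.eq_castSucc_or_eq_last j with ⟨j', rfl⟩ | rfl
        · rw [hgc, hgc] at h
          rw [E.injective (Subtype.ext h)]
        · rw [hgc, hgl] at h
          exact absurd h (Finset.mem_erase.1 (E i').2).1
        · rw [hgc, hgl] at h
          exact absurd h.symm (Finset.mem_erase.1 (E j').2).1
        · rfl
      have hop : IsOP k (m' + 1) g := by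
        refine ⟨fun t => P.1.nonempty_of_mem_parts (hmem t), fun i j hne => ?_, ?_⟩
        · exact P.1.disjoint (hmem i) (hmem j) (fun h => hne (ginj h))
        · apply eq_univ_iff_forall.2
          intro a
          obtain ⟨t, htp, hat⟩ := P.1.exists_mem (mem_univ a)
          rw [← himg] at htp
          obtain ⟨i, _, rfl⟩ := Finset.mem_image.1 htp
          exact Finset.mem_biUnion.2 ⟨i, mem_univ _, hat⟩
      refine ⟨⟨hop, by rw [finLast_succ, hgl]; exact hκp0⟩, ?_⟩
      apply Subtype.ext
      show mkPart g hop = P.1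
      apply Finpartition.ext
      show Finset.image g univ = P.1.parts
      exact himg
    have hbij : (Finset.univ.filter (fun g : NOPt => π g = P)).card
        = (Finset.univ : Finset (Fin m' ↪ X)).card := by
      refine Finset.card_bij'
        (fun (g : NOPt) (hg : g ∈ Finset.univ.filter (fun g : NOPt => π g = P)) =>
          (⟨fun i : Fin m' => (⟨g.1 i.castSucc,
              hfwd_mem g (by simpa using hg) i⟩ : X),
            fun i j hij => Fin.castSucc_injective m'
              (isOP_injective g.2.1 (congrArg Subtype.val hij))⟩ : Fin m' ↪ X))
        (fun E _ => ⟨Fin.lastCases p0 (fun i => (E i).1), (hinv E).choose⟩)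
        (fun g hg => mem_univ _)
        (fun E hE => by
          rw [Finset.mem_filter]
          exact ⟨mem_univ _, (hinv E).choose_spec⟩)
        ?_ ?_
      · intro g hg
        apply Subtype.ext
        funext t
        rcases Fin.eq_castSucc_or_eq_last t with ⟨t', rfl⟩ | rfl
        · simp
          rfl
        · simp only [Fin.lastCases_last]
          exact (hglast g (by simpa using hg)).symm
      · intro E hE
        apply DFunLike.ext
        intro i
        apply Subtype.ext
        simp
    rw [hbij, Finset.card_univ, Fintype.card_embedding_eq, Fintype.card_fin,
      Fintype.card_coe, hcerase, Nat.descFactorial_self]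
  rw [Finset.sum_congr rfl (fun P _ => hfiber P), Finset.sum_const, smul_eq_mul, ← hstir]

end Count

end TonnAux

open TonnAux in
theorem stmt_1 (n k m : ℕ) (hn : 1 ≤ n) (hk : 1 ≤ k)
    (L : Fin k → ℕ) (hL : ∀ i, 0 < L i) (hsum : ∑ i, L i = n)
    (hgen : TonnGeneric k L) (hm : 1 ≤ m) (hmk : m ≤ k) :
    Set.ncard {S : Finset (ZMod n) | IsTonnFace n k L S ∧ S.card = m} =
      n * (m - 1).factorial * stirlingSnd k m := by
  classical
  obtain ⟨m', rfl⟩ : ∃ m', m = m' + 1 := ⟨m - 1, by omega⟩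
  haveI : NeZero n := ⟨by omega⟩
  have hn0 : 0 < n := by omega
  set κ : Fin k := ⟨k - 1, by omega⟩ with hκ
  set NOPt := {f : Fin (m' + 1) → Finset (Fin k) //
      IsOP k (m' + 1) f ∧ κ ∈ f (finLast (m' + 1))} with hNOPt
  set A := {S : Finset (ZMod n) | IsTonnFace n k L S ∧ S.card = m' + 1} with hA
  set Φ : ZMod n × NOPt → ↥A := fun p =>
    ⟨phiF n L p.2.1 p.1,
      ⟨phiF_face hn0 hL p.2.2.1 hsum p.1, phiF_card hn0 hL p.2.2.1 hsum p.1⟩⟩ with hΦ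
  have hbij : Function.Bijective Φ := by
    constructor
    · rintro ⟨x, f⟩ ⟨x', f'⟩ h
      have heq : phiF n L f.1 x = phiF n L f'.1 x' := congrArg Subtype.val h
      obtain ⟨hx, hf⟩ := phiF_inj_full hn0 hL hsum hgen f.2.1 f'.2.1 f.2.2 f'.2.2 heq
      exact Prod.ext hx (Subtype.ext hf)
    · rintro ⟨S, hSface, hScard⟩
      obtain ⟨x1, f1, hop1, heq1⟩ :=
        face_eq_phiF (m := m' + 1) hn0 hL hsum hSface hScard
      have hκmem : κ ∈ Finset.univ.biUnion f1 := by
        rw [hop1.2.2]; exact Finset.mem_univ κ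
      obtain ⟨i0, _, hi0⟩ := Finset.mem_biUnion.1 hκmem
      set d : ℕ := ((i0 - finLast (m' + 1)) : Fin (m' + 1)).val with hd
      have hnorm : κ ∈ rotF d f1 (finLast (m' + 1)) := by
        show κ ∈ f1 (finLast (m' + 1) + ((d : ℕ) : Fin (m' + 1)))
        rw [hd, Fin.cast_val_eq_self]
        have : finLast (m' + 1) + (i0 - finLast (m' + 1)) = i0 := by abel
        rw [this]
        exact hi0
      refine ⟨⟨x1 + ((Cs L f1 d : ℕ) : ZMod n), ⟨rotF d f1, rotF_isOP hop1 d, hnorm⟩⟩, ?_⟩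
      apply Subtype.ext
      show phiF n L (rotF d f1) (x1 + ((Cs L f1 d : ℕ) : ZMod n)) = S
      rw [← phiF_rot hop1 hsum d x1]
      exact heq1
  have h1 : Set.ncard A = Nat.card (ZMod n × NOPt) := by
    rw [← Nat.card_coe_set_eq]
    exact (Nat.card_eq_of_bijective Φ hbij).symm
  rw [h1, Nat.card_prod, Nat.card_zmod, card_NOP κ]
  simp only [Nat.add_sub_cancel]
  ring
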